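/- Let S be a 2×2 real matrix and G a 2×2 real symmetric matrix. Then the complex Hermitian matrix G + i(J − S J Sᵀ) is positive semidefinite if and only if G is positive semidefinite and det G ≥ (1 − det S)². (In particular S J Sᵀ = (det S)·J, so the condition reads G + i(1 − det S)J ⪰ 0.) -/

import Mathlib

open Matrix ComplexOrder

noncomputable section

def J2 : Matrix (Fin 2) (Fin 2) ℝ := !![0, 1; -1, 0]

lemma herm2 (a b c d : ℝ) :
    (!![(a:ℂ), b + c*Complex.I; b - c*Complex.I, d]).IsHermitian := by
  ext i j
  fin_cases i <;> fin_cases j <;>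
    simp [Matrix.IsHermitian, conjTranspose_apply, Complex.ext_iff]

lemma psd2_complex (a b c d : ℝ) :
    (!![(a:ℂ), b + c*Complex.I; b - c*Complex.I, d]).PosSemidef ↔
      0 ≤ a ∧ 0 ≤ d ∧ b^2 + c^2 ≤ a*d := by
  constructor
  · intro hP
    obtain ⟨_, h⟩ := posSemidef_iff_dotProduct_mulVec.mp hP
    have ha : 0 ≤ a := by
      have := h ![1, 0]
      simp [dotProduct, mulVec, Fin.sum_univ_two] at this
      exact_mod_cast this
    have hd : 0 ≤ d := by
      have := h ![0, 1]
      simp [dotProduct, mulVec, Fin.sum_univ_two] at this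
      exact_mod_cast this
    refine ⟨ha, hd, ?_⟩
    have key : ∀ t : ℝ, 0 ≤ (a*(b^2+c^2)) * (t*t) + (2*(b^2+c^2)) * t + d := by
      intro t
      have h2 := h ![(t*b:ℝ) + (t*c:ℝ)*Complex.I, 1]
      rw [Complex.le_def] at h2
      obtain ⟨h1, -⟩ := h2
      simp [dotProduct, mulVec, Fin.sum_univ_two, Complex.add_re, Complex.mul_re,
        Complex.mul_im, Complex.add_im, Complex.sub_re, Complex.sub_im] at h1
      nlinarith [h1]
    have hdis := discrim_le_zero key
    rw [discrim] at hdis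
    rcases eq_or_lt_of_le (by positivity : (0:ℝ) ≤ b^2 + c^2) with h0 | h0
    · nlinarith
    · nlinarith
  · intro ⟨ha, hd, hk⟩
    refine posSemidef_iff_dotProduct_mulVec.mpr ⟨herm2 a b c d, fun x => ?_⟩
    simp [dotProduct, mulVec, Fin.sum_univ_two]
    rw [Complex.le_def]
    constructor
    · simp only [Complex.zero_re, Complex.add_re, Complex.mul_re, Complex.mul_im,
        Complex.add_im, Complex.ofReal_re, Complex.ofReal_im, Complex.I_re, Complex.I_im,
        Complex.sub_re, Complex.sub_im, RCLike.star_def, Complex.conj_re, Complex.conj_im, neg_zero, mul_zero, zero_mul, mul_one, zero_add,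
        add_zero, sub_zero, zero_sub, mul_neg, neg_neg, neg_mul, sub_neg_eq_add]
      set p := (x 0).re; set q := (x 0).im; set u := (x 1).re; set v := (x 1).im
      rcases eq_or_lt_of_le ha with h0 | h0
      · have hb : b = 0 := by nlinarith
        have hc : c = 0 := by nlinarith
        rw [hb, hc, ← h0]
        nlinarith [sq_nonneg u, sq_nonneg v]
      · nlinarith [sq_nonneg (a*p + b*u - c*v), sq_nonneg (a*q + c*u + b*v),
          mul_nonneg (by nlinarith : (0:ℝ) ≤ a*d - b^2 - c^2)
            (by positivity : (0:ℝ) ≤ u^2 + v^2)]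
    · simp only [Complex.zero_im, Complex.add_im, Complex.mul_re, Complex.mul_im,
        Complex.add_re, Complex.ofReal_re, Complex.ofReal_im, Complex.I_re, Complex.I_im,
        Complex.sub_re, Complex.sub_im, RCLike.star_def, Complex.conj_re, Complex.conj_im]
      ring

lemma psd2_real (G : Matrix (Fin 2) (Fin 2) ℝ) (hG : G.IsSymm)
    (h10 : G 1 0 = G 0 1) :
    G.PosSemidef ↔ 0 ≤ G 0 0 ∧ 0 ≤ G 1 1 ∧ (G 0 1)^2 ≤ G 0 0 * G 1 1 := by
  constructor
  · intro hP
    obtain ⟨_, h⟩ := posSemidef_iff_dotProduct_mulVec.mp hP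
    have ha : 0 ≤ G 0 0 := by
      have := h ![1, 0]; simpa [dotProduct, mulVec, Fin.sum_univ_two] using this
    have hd : 0 ≤ G 1 1 := by
      have := h ![0, 1]; simpa [dotProduct, mulVec, Fin.sum_univ_two] using this
    refine ⟨ha, hd, ?_⟩
    have key : ∀ t : ℝ, 0 ≤ G 0 0 * (t*t) + (2 * G 0 1) * t + G 1 1 := by
      intro t
      have := h ![t, 1]
      simp [dotProduct, mulVec, Fin.sum_univ_two, h10] at this
      nlinarith [this]
    have hdis := discrim_le_zero key
    rw [discrim] at hdis
    nlinarith
  · intro ⟨ha, hd, hk⟩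
    rw [posSemidef_iff_dotProduct_mulVec]
    constructor
    · rw [Matrix.IsHermitian, conjTranspose_eq_transpose_of_trivial]; exact hG
    · intro x
      simp only [star_trivial, dotProduct, mulVec, Fin.sum_univ_two]
      rcases eq_or_lt_of_le ha with h0 | h0
      · have hb : G 0 1 = 0 := by nlinarith
        rw [h10, hb, ← h0]
        nlinarith [sq_nonneg (x 0), sq_nonneg (x 1)]
      · rw [h10]
        nlinarith [sq_nonneg (G 0 0 * x 0 + G 0 1 * x 1),
          mul_nonneg (by nlinarith : (0:ℝ) ≤ G 0 0 * G 1 1 - (G 0 1)^2)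
            (sq_nonneg (x 1))]

/-- the complete positivity condition for a single-mode TGCP map is
equivalent to G ⪰ 0 together with det G ≥ (1 − det S)². -/
theorem TGCP_condition_iff (S G : Matrix (Fin 2) (Fin 2) ℝ) (hG : G.IsSymm) :
    (G.map (Complex.ofReal) +
        Complex.I • ((J2 - S * J2 * Sᵀ).map (Complex.ofReal))).PosSemidef ↔
      G.PosSemidef ∧ (1 - S.det)^2 ≤ G.det := by
  have h10 : G 1 0 = G 0 1 :=
    (Matrix.transpose_apply G 0 1).symm.trans (congrFun (congrFun hG 0) 1)
  have h1 : J2 - S * J2 * Sᵀ = (1 - S.det) • J2 := by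
    ext i j
    fin_cases i <;> fin_cases j <;>
      simp [J2, Matrix.mul_apply, Fin.sum_univ_two, Matrix.det_fin_two] <;> ring
  have hM : G.map (Complex.ofReal) +
        Complex.I • ((J2 - S * J2 * Sᵀ).map (Complex.ofReal)) =
      !![(G 0 0 : ℂ), G 0 1 + ((1 - S.det : ℝ) : ℂ)*Complex.I;
         G 0 1 - ((1 - S.det : ℝ) : ℂ)*Complex.I, G 1 1] := by
    rw [h1]
    ext i j
    fin_cases i <;> fin_cases j <;>
      simp [J2, Matrix.map_apply, h10, Complex.ext_iff]
  rw [hM, psd2_complex, psd2_real G hG h10, Matrix.det_fin_two G, h10]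
  constructor
  · rintro ⟨ha, hd, hk⟩
    exact ⟨⟨ha, hd, by nlinarith⟩, by nlinarith⟩
  · rintro ⟨⟨ha, hd, hb⟩, hk⟩
    exact ⟨ha, hd, by nlinarith⟩
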